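/- Let n ≥ 2 and let F ⊆ S_n be an intersecting family of permutations with |F| = (n-1)!. Then there exist i, j ∈ [n] such that F = {σ ∈ S_n : σ(i) = j}. -/

import Mathlib

open Finset Equiv

variable {n : ℕ}

abbrev Pm (n : ℕ) := Equiv.Perm (Fin n)

/-- pairwise disjointness of a finset of permutations -/
def IsClique (C : Finset (Pm n)) : Prop :=
  ∀ γ ∈ C, ∀ γ' ∈ C, γ ≠ γ' → ∀ i, γ i ≠ γ' i

/-- Every clique of size n meets an intersecting family of size (n-1)!. -/
lemma clique_meets (hn : 1 ≤ n) (B : Finset (Pm n))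
    (hint : ∀ σ ∈ B, ∀ π ∈ B, ∃ i, σ i = π i)
    (hcard : B.card = (n - 1).factorial)
    (C : Finset (Pm n)) (hC : IsClique C) (hCcard : C.card = n) :
    ∃ γ ∈ C, γ ∈ B := by
  classical
  set s : Pm n → ℕ := fun q => (C.filter fun γ => γ * q ∈ B).card with hs
  have hsum : ∑ q : Pm n, s q = n * (n-1).factorial := by
    have : ∀ q : Pm n, s q = ∑ γ ∈ C, if γ * q ∈ B then 1 else 0 := by
      intro q; rw [hs]; exact Finset.card_filter _ _
    rw [Finset.sum_congr rfl (fun q _ => this q), Finset.sum_comm]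
    have hinner : ∀ γ ∈ C, (∑ q : Pm n, if γ * q ∈ B then 1 else 0) = (n-1).factorial := by
      intro γ _
      have h2 : (∑ q : Pm n, if γ * q ∈ B then 1 else 0)
          = ((Finset.univ : Finset (Pm n)).filter fun q => γ * q ∈ B).card := by
        rw [Finset.card_filter]
      rw [h2]
      have himg : ((Finset.univ : Finset (Pm n)).filter fun q => γ * q ∈ B)
          = B.image (fun β => γ⁻¹ * β) := by
        ext q
        simp only [Finset.mem_filter, Finset.mem_univ, true_and, Finset.mem_image]
        constructor
        · intro h; exact ⟨γ * q, h, by group⟩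
        · rintro ⟨β, hβ, rfl⟩; simpa using hβ
      rw [himg, Finset.card_image_of_injective _ (mul_right_injective _), hcard]
    rw [Finset.sum_congr rfl hinner, Finset.sum_const, hCcard, smul_eq_mul]
  have hle : ∀ q : Pm n, s q ≤ 1 := by
    intro q
    rw [hs]
    rw [Finset.card_le_one]
    intro γ hγ γ' hγ'
    simp only [Finset.mem_filter] at hγ hγ'
    by_contra hne
    obtain ⟨i, hi⟩ := hint _ hγ.2 _ hγ'.2
    exact hC _ hγ.1 _ hγ'.1 hne (q i) hi
  have hcardU : (Finset.univ : Finset (Pm n)).card = n * (n-1).factorial := by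
    rw [Finset.card_univ, Fintype.card_perm, Fintype.card_fin]
    obtain ⟨m, rfl⟩ := Nat.exists_eq_add_of_le hn
    simp [Nat.factorial_succ, Nat.add_comm 1 m]
  have hall : ∀ q : Pm n, s q = 1 := by
    by_contra h
    push_neg at h
    obtain ⟨q₀, hq₀⟩ := h
    have hlt : s q₀ < 1 := lt_of_le_of_ne (hle q₀) hq₀
    have hstrict : ∑ q : Pm n, s q < ∑ _q : Pm n, 1 :=
      Finset.sum_lt_sum (fun i _ => hle i) ⟨q₀, Finset.mem_univ _, hlt⟩
    rw [hsum, Finset.sum_const, smul_eq_mul, mul_one, hcardU] at hstrict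
    exact lt_irrefl _ hstrict
  have h1 := hall 1
  rw [hs] at h1
  have hne : (C.filter fun γ => γ * 1 ∈ B).Nonempty := by
    rw [← Finset.card_pos]; simp only at h1; omega
  obtain ⟨γ, hγ⟩ := hne
  simp only [Finset.mem_filter, mul_one] at hγ
  exact ⟨γ, hγ.1, hγ.2⟩
lemma clique_extend_one (C : Finset (Pm n)) (hC : IsClique C) (hlt : C.card < n) :
    ∃ τ : Pm n, τ ∉ C ∧ IsClique (insert τ C) := by
  classical
  have hnpos : 0 < n := lt_of_le_of_lt (Nat.zero_le _) hlt
  set k := C.card with hk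
  set t : Fin n → Finset (Fin n) :=
    fun i => Finset.univ \ C.image (fun γ => γ i) with ht
  have hinjOn : ∀ i : Fin n, Set.InjOn (fun γ : Pm n => γ i) C := by
    intro i γ hγ γ' hγ' h
    by_contra hne
    exact hC _ hγ _ hγ' hne i h
  have htcard : ∀ i, (t i).card = n - k := by
    intro i
    rw [ht]
    rw [Finset.card_sdiff_of_subset (Finset.subset_univ _), Finset.card_univ, Fintype.card_fin,
      Finset.card_image_of_injOn (hinjOn i)]
  have hvalcard : ∀ v : Fin n,
      (Finset.univ.filter (fun i : Fin n => v ∈ t i)).card = n - k := by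
    intro v
    have heq : Finset.univ.filter (fun i : Fin n => v ∈ t i)
        = Finset.univ \ C.image (fun γ => γ⁻¹ v) := by
      ext i
      simp only [ht, Finset.mem_filter, Finset.mem_univ, true_and, Finset.mem_sdiff,
        Finset.mem_image]
      constructor
      · intro h
        rintro ⟨γ, hγ, rfl⟩
        exact h ⟨γ, hγ, by simp⟩
      · intro h
        rintro ⟨γ, hγ, hgi⟩
        exact h ⟨γ, hγ, by rw [← hgi]; simp⟩
    rw [heq, Finset.card_sdiff_of_subset (Finset.subset_univ _), Finset.card_univ, Fintype.card_fin]
    congr 1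
    apply Finset.card_image_of_injOn
    intro γ hγ γ' hγ' h
    by_contra hne
    refine hC _ hγ _ hγ' hne (γ⁻¹ v) ?_
    simp only at h
    rw [h]
    rw [show γ' (γ'⁻¹ v) = v from γ'.apply_symm_apply v]
    rw [← h]
    simp
  have hall : ∀ s : Finset (Fin n), s.card ≤ (s.biUnion t).card := by
    intro s
    have hmul : s.card * (n - k) ≤ (s.biUnion t).card * (n - k) := by
      apply Finset.card_mul_le_card_mul (fun i v => v ∈ t i)
      · intro i hi
        have : t i ⊆ Finset.bipartiteAbove (fun i v => v ∈ t i) (s.biUnion t) i := by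
          intro v hv
          simp only [Finset.bipartiteAbove, Finset.mem_filter, Finset.mem_biUnion]
          exact ⟨⟨i, hi, hv⟩, hv⟩
        calc n - k = (t i).card := (htcard i).symm
          _ ≤ _ := Finset.card_le_card this
      · intro v _
        have : Finset.bipartiteBelow (fun i v => v ∈ t i) s v
            ⊆ Finset.univ.filter (fun i : Fin n => v ∈ t i) := by
          intro i hi
          simp only [Finset.bipartiteBelow, Finset.mem_filter] at hi ⊢
          exact ⟨Finset.mem_univ _, hi.2⟩
        calc (Finset.bipartiteBelow (fun i v => v ∈ t i) s v).card
            ≤ _ := Finset.card_le_card this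
          _ = n - k := hvalcard v
    have hpos : 0 < n - k := by omega
    exact Nat.le_of_mul_le_mul_right hmul hpos
  obtain ⟨f, hfinj, hft⟩ := (Finset.all_card_le_biUnion_card_iff_exists_injective t).mp hall
  have hfbij : Function.Bijective f := Finite.injective_iff_bijective.mp hfinj
  set τ := Equiv.ofBijective f hfbij with hτ
  have hdis : ∀ γ ∈ C, ∀ i, τ i ≠ γ i := by
    intro γ hγ i
    have := hft i
    rw [ht] at this
    simp only [Finset.mem_sdiff, Finset.mem_image, not_exists] at this
    push_neg at this
    intro h
    exact this.2 γ hγ (by rw [← h]; rfl)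
  have hτnotin : τ ∉ C := by
    intro hmem
    exact hdis τ hmem ⟨0, hnpos⟩ rfl
  refine ⟨τ, hτnotin, ?_⟩
  intro γ hγ γ' hγ' hne i
  rcases Finset.mem_insert.mp hγ with rfl | hγ <;>
    rcases Finset.mem_insert.mp hγ' with rfl | hγ'
  · exact absurd rfl hne
  · exact hdis _ hγ' i
  · exact fun h => (hdis _ hγ i) h.symm
  · exact hC _ hγ _ hγ' hne i

lemma clique_extend (C : Finset (Pm n)) (hC : IsClique C) (hle : C.card ≤ n) :
    ∃ D : Finset (Pm n), C ⊆ D ∧ IsClique D ∧ D.card = n := by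
  classical
  obtain ⟨m, hm⟩ : ∃ m, n - C.card = m := ⟨_, rfl⟩
  induction m generalizing C with
  | zero => exact ⟨C, Finset.Subset.refl _, hC, by omega⟩
  | succ m ih =>
    obtain ⟨τ, hτ, hclique⟩ := clique_extend_one C hC (by omega)
    obtain ⟨D, hsub, hDc, hDcard⟩ := ih (insert τ C) hclique
      (by rw [Finset.card_insert_of_notMem hτ]; omega)
      (by rw [Finset.card_insert_of_notMem hτ]; omega)
    exact ⟨D, Finset.Subset.trans (Finset.subset_insert _ _) hsub, hDc, hDcard⟩
lemma transfer_idem {α : Type} [Fintype α] [DecidableEq α] (e : α ≃ Fin n)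
    (f : α → α → α) (hbij : ∀ t, Function.Bijective (f t)) (hdiag : ∀ t, f t t = t)
    (hdisj : ∀ t₁ t₂, t₁ ≠ t₂ → ∀ c, f t₁ c ≠ f t₂ c) :
    ∃ R : Fin n → Pm n, (∀ a, R a a = a) ∧ (∀ a b i, a ≠ b → R a i ≠ R b i) := by
  refine ⟨fun a => ((e.symm.trans (Equiv.ofBijective _ (hbij (e.symm a)))).trans e), ?_, ?_⟩
  · intro a
    simp only [Equiv.trans_apply, Equiv.ofBijective_apply, hdiag]
    exact e.apply_symm_apply a
  · intro a b i hne
    simp only [Equiv.trans_apply, Equiv.ofBijective_apply]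
    intro h
    exact hdisj (e.symm a) (e.symm b) (fun hh => hne (by
      have := congrArg e hh; simpa using this)) (e.symm i) (e.injective h)

lemma idem_odd (hn3 : 3 ≤ n) (ho : Odd n) :
    ∃ R : Fin n → Pm n, (∀ a, R a a = a) ∧ (∀ a b i, a ≠ b → R a i ≠ R b i) := by
  haveI : NeZero n := ⟨by omega⟩
  set k : ZMod n := (((n+1)/2 : ℕ) : ZMod n) with hk
  have h2k : (2:ZMod n) * k = 1 := by
    obtain ⟨j, hj⟩ := ho
    have hnat : 2 * ((n+1)/2) = n + 1 := by omega
    calc (2:ZMod n)*k = ((2*((n+1)/2) : ℕ) : ZMod n) := by rw [hk]; push_cast; ring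
      _ = ((n : ℕ) : ZMod n) + 1 := by rw [hnat]; push_cast; ring
      _ = 1 := by rw [ZMod.natCast_self]; ring
  have e1 : ∀ x : ZMod n, 2*(k*x) = x := by
    intro x; rw [← mul_assoc, h2k, one_mul]
  set f : ZMod n → ZMod n → ZMod n := fun a i => k * (a + i) with hf
  have hbij : ∀ t, Function.Bijective (f t) := by
    intro t
    rw [← Finite.injective_iff_bijective]
    intro c₁ c₂ h
    simp only [hf] at h
    have h2 := congrArg (fun x => 2*x) h
    simp only [e1] at h2
    exact add_left_cancel h2
  have hdiag : ∀ t, f t t = t := by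
    intro t; simp only [hf]; linear_combination t * h2k
  have hdisj : ∀ t₁ t₂, t₁ ≠ t₂ → ∀ c, f t₁ c ≠ f t₂ c := by
    intro t₁ t₂ hne c h
    simp only [hf] at h
    have h2 := congrArg (fun x => 2*x) h
    simp only [e1] at h2
    exact hne (add_right_cancel h2)
  exact transfer_idem (Fintype.equivOfCardEq (by rw [ZMod.card, Fintype.card_fin]))
    f hbij hdiag hdisj

lemma idem_even (hn3 : 3 ≤ n) (he : Even n) :
    ∃ R : Fin n → Pm n, (∀ a, R a a = a) ∧ (∀ a b i, a ≠ b → R a i ≠ R b i) := by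
  obtain ⟨m, hm⟩ : ∃ m, n = m + 1 := ⟨n - 1, by omega⟩
  have hm3 : 3 ≤ m := by
    rcases he with ⟨j, hj⟩; omega
  haveI : NeZero m := ⟨by omega⟩
  set k : ZMod m := (((m+1)/2 : ℕ) : ZMod m) with hk
  have h2k : (2:ZMod m) * k = 1 := by
    have hmodd : m % 2 = 1 := by rcases he with ⟨j, hj⟩; omega
    have hnat : 2 * ((m+1)/2) = m + 1 := by omega
    calc (2:ZMod m)*k = ((2*((m+1)/2) : ℕ) : ZMod m) := by rw [hk]; push_cast; ring
      _ = ((m : ℕ) : ZMod m) + 1 := by rw [hnat]; push_cast; ring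
      _ = 1 := by rw [ZMod.natCast_self]; ring
  have e1 : ∀ x : ZMod m, 2*(k*x) = x := by
    intro x; rw [← mul_assoc, h2k, one_mul]
  have hone : (1 : ZMod m) ≠ 0 := by
    haveI : Fact (1 < m) := ⟨by omega⟩
    exact one_ne_zero
  -- the prolonged square on Option (ZMod m)
  set f : Option (ZMod m) → Option (ZMod m) → Option (ZMod m) :=
    fun t c => match t, c with
      | some r, some c => if c = r + 1 then none else some (k*(r+c))
      | some r, none => some (r + k)
      | none, some c => some (c - 1 + k)
      | none, none => none
    with hf
  have hself : ∀ r : ZMod m, r ≠ r + 1 := by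
    intro r h
    exact hone (by linear_combination -h)
  have hbij : ∀ t, Function.Bijective (f t) := by
    intro t
    rw [← Finite.injective_iff_bijective]
    intro c₁ c₂ hcc
    match t, c₁, c₂ with
    | some r, some c₁, some c₂ =>
      simp only [hf] at hcc
      by_cases h1 : c₁ = r + 1 <;> by_cases h2 : c₂ = r + 1
      · rw [h1, h2]
      · rw [if_pos h1, if_neg h2] at hcc; exact absurd hcc (by simp)
      · rw [if_neg h1, if_pos h2] at hcc; exact absurd hcc (by simp)
      · rw [if_neg h1, if_neg h2] at hcc
        injection hcc with hcc
        have h3 := congrArg (fun x => 2*x) hcc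
        simp only [e1] at h3
        exact congrArg some (add_left_cancel h3)
    | some r, some c₁, none =>
      simp only [hf] at hcc
      by_cases h1 : c₁ = r + 1
      · rw [if_pos h1] at hcc; exact absurd hcc (by simp)
      · rw [if_neg h1] at hcc
        injection hcc with hcc
        have h3 := congrArg (fun x => 2*x) hcc
        simp only [e1] at h3
        exfalso
        apply h1
        linear_combination h3 + h2k
    | some r, none, some c₂ =>
      simp only [hf] at hcc
      by_cases h1 : c₂ = r + 1
      · rw [if_pos h1] at hcc; exact absurd hcc (by simp)
      · rw [if_neg h1] at hcc
        injection hcc with hcc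
        have h3 := congrArg (fun x => 2*x) hcc
        simp only [e1] at h3
        exfalso
        apply h1
        linear_combination -h3 + h2k
    | some r, none, none => rfl
    | none, some c₁, some c₂ =>
      simp only [hf, Option.some.injEq] at hcc
      have : c₁ = c₂ := by linear_combination hcc
      rw [this]
    | none, some c₁, none => exact absurd hcc (by simp [hf])
    | none, none, some c₂ => exact absurd hcc (by simp [hf])
    | none, none, none => rfl
  have hdiag : ∀ t, f t t = t := by
    intro t
    match t with
    | some r =>
      simp only [hf]
      rw [if_neg (hself r)]
      simp only [Option.some.injEq]
      linear_combination r * h2k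
    | none => rfl
  have hdisj : ∀ t₁ t₂, t₁ ≠ t₂ → ∀ c, f t₁ c ≠ f t₂ c := by
    have key : ∀ (r : ZMod m) (c : Option (ZMod m)), f (some r) c ≠ f none c := by
      intro r c
      match c with
      | some c =>
        simp only [hf]
        by_cases h1 : c = r + 1
        · rw [if_pos h1]; simp
        · rw [if_neg h1]
          simp only [Ne, Option.some.injEq]
          intro h
          apply h1
          have h3 := congrArg (fun x => 2*x) h
          simp only [e1] at h3
          linear_combination -h3 - h2k
      | none => simp [hf]
    intro t₁ t₂ hne c
    match t₁, t₂ with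
    | some r₁, some r₂ =>
      have hrne : r₁ ≠ r₂ := fun h => hne (by rw [h])
      match c with
      | some c =>
        simp only [hf]
        by_cases h1 : c = r₁ + 1 <;> by_cases h2 : c = r₂ + 1
        · exact absurd (add_right_cancel (h1.symm.trans h2)) hrne
        · rw [if_pos h1, if_neg h2]; simp
        · rw [if_neg h1, if_pos h2]; simp
        · rw [if_neg h1, if_neg h2]
          simp only [Ne, Option.some.injEq]
          intro h
          have h3 := congrArg (fun x => 2*x) h
          simp only [e1] at h3
          exact hrne (add_right_cancel h3)
      | none =>
        simp only [hf, Ne, Option.some.injEq]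
        intro h
        exact hrne (add_right_cancel h)
    | some r, none => exact key r c
    | none, some r => exact (key r c).symm
    | none, none => exact absurd rfl hne
  have hcard : Fintype.card (Option (ZMod m)) = Fintype.card (Fin n) := by
    rw [Fintype.card_option, ZMod.card, Fintype.card_fin, hm]
  exact transfer_idem (Fintype.equivOfCardEq hcard) f hbij hdiag hdisj

lemma exists_idem_perm (hn3 : 3 ≤ n) :
    ∃ R : Fin n → Pm n, (∀ a, R a a = a) ∧ (∀ a b i, a ≠ b → R a i ≠ R b i) := by
  rcases Nat.even_or_odd n with he | ho
  · exact idem_even hn3 he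
  · exact idem_odd hn3 ho
lemma avoid_perm (hn : 4 ≤ n) (a x : Fin n) (hax : a ≠ x) (σ : Pm n)
    (hfix : ∀ y, σ y = y → y ≠ a ∧ y ≠ x)
    (hgne : ∃ g, σ g = g)
    (hno2 : n = 5 → ∀ p q : Fin n, p ≠ a → p ≠ x → q ≠ a → q ≠ x →
      σ p = q → σ q = p → p = q) :
    ∃ e : Pm n, e a = a ∧ e x = x ∧ ∀ y, y ≠ a → y ≠ x → (e y ≠ y ∧ e y ≠ σ y) := by
  classical
  set S : Finset (Fin n) := Finset.univ \ {a, x} with hSdef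
  have hmemS : ∀ y : Fin n, y ∈ S ↔ (y ≠ a ∧ y ≠ x) := by
    intro y
    simp [hSdef, Finset.mem_sdiff, Finset.mem_insert, Finset.mem_singleton]
  have hScard : S.card = n - 2 := by
    rw [hSdef, Finset.card_sdiff_of_subset (Finset.subset_univ _), Finset.card_univ, Fintype.card_fin]
    congr 1
    rw [Finset.card_insert_of_notMem (by simpa using hax), Finset.card_singleton]
  by_cases hbig : 6 ≤ n
  · -- Hall case
    have h4 : 4 ≤ S.card := by omega
    set A : Fin n → Finset (Fin n) := fun y => S \ {y, σ y} with hA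
    have hAsub : ∀ y, A y ⊆ S := fun y => Finset.sdiff_subset
    have hAcard : ∀ y, S.card ≤ (A y).card + 2 := by
      intro y
      have h1 : S.card ≤ (A y).card + ({y, σ y} : Finset (Fin n)).card :=
        Finset.card_le_card_sdiff_add_card
      have h2 : ({y, σ y} : Finset (Fin n)).card ≤ 2 := by
        apply le_trans (Finset.card_insert_le _ _); simp
      omega
    have hall : ∀ P : Finset {y // y ∈ S},
        P.card ≤ (P.biUnion (fun y => A ↑y)).card := by
      intro P
      rcases P.eq_empty_or_nonempty with rfl | ⟨y₀, hy₀⟩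
      · simp
      by_cases hP : P.card ≤ S.card - 2
      · calc P.card ≤ S.card - 2 := hP
          _ ≤ (A ↑y₀).card := by have := hAcard (↑y₀ : Fin n); omega
          _ ≤ _ := Finset.card_le_card
              (Finset.subset_biUnion_of_mem (fun y : {y // y ∈ S} => A ↑y) hy₀)
      · push_neg at hP
        have hP3 : 3 ≤ P.card := by omega
        have hSsub : S ⊆ P.biUnion (fun y => A ↑y) := by
          intro v hv
          by_contra hvn
          simp only [Finset.mem_biUnion, not_exists] at hvn
          push_neg at hvn
          have hPsub : ∀ y ∈ P, (↑y : Fin n) = v ∨ (↑y : Fin n) = σ⁻¹ v := by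
            intro y hy
            have hnv := hvn y hy
            rw [hA] at hnv
            have hvy : v = ↑y ∨ v = σ ↑y := by
              by_contra hcon
              push_neg at hcon
              exact hnv (Finset.mem_sdiff.mpr ⟨hv, by simp [hcon.1, hcon.2]⟩)
            rcases hvy with h | h
            · left; exact h.symm
            · right; rw [h]; simp
          have himg : P.image (fun y : {y // y ∈ S} => (↑y : Fin n)) ⊆ {v, σ⁻¹ v} := by
            intro w hw
            rw [Finset.mem_image] at hw
            obtain ⟨y, hy, hyw⟩ := hw
            subst hyw
            rcases hPsub y hy with h | h <;> simp [h]
          have hcard2 : P.card ≤ 2 := by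
            calc P.card = (P.image (fun y : {y // y ∈ S} => (↑y : Fin n))).card :=
                (Finset.card_image_of_injective _ Subtype.coe_injective).symm
              _ ≤ ({v, σ⁻¹ v} : Finset (Fin n)).card := Finset.card_le_card himg
              _ ≤ 2 := by apply le_trans (Finset.card_insert_le _ _); simp
          omega
        calc P.card ≤ Fintype.card {y // y ∈ S} := Finset.card_le_univ P
          _ = S.card := Fintype.card_coe S
          _ ≤ _ := Finset.card_le_card hSsub
    obtain ⟨f, hfinj, hft⟩ :=
      (Finset.all_card_le_biUnion_card_iff_exists_injective (fun y : {y // y ∈ S} => A ↑y)).mp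
        hall
    set g : Fin n → Fin n := fun y => if h : y ∈ S then f ⟨y, h⟩ else y with hg
    have hgS : ∀ y (h : y ∈ S), g y = f ⟨y, h⟩ := by
      intro y h; simp [hg, dif_pos h]
    have hgNS : ∀ y, y ∉ S → g y = y := by
      intro y h; simp [hg, dif_neg h]
    have hfS : ∀ y : {y // y ∈ S}, f y ∈ S := fun y => hAsub _ (hft y)
    have hginj : Function.Injective g := by
      intro y₁ y₂ h
      by_cases h1 : y₁ ∈ S <;> by_cases h2 : y₂ ∈ S
      · rw [hgS y₁ h1, hgS y₂ h2] at h
        exact congrArg Subtype.val (hfinj h)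
      · rw [hgS y₁ h1, hgNS y₂ h2] at h
        exact absurd (h ▸ hfS ⟨y₁, h1⟩) h2
      · rw [hgNS y₁ h1, hgS y₂ h2] at h
        exfalso; apply h1; rw [h]; exact hfS ⟨y₂, h2⟩
      · rw [hgNS y₁ h1, hgNS y₂ h2] at h; exact h
    set e := Equiv.ofBijective g (Finite.injective_iff_bijective.mp hginj) with he
    have heval : ∀ y, e y = g y := fun y => rfl
    refine ⟨e, ?_, ?_, ?_⟩
    · rw [heval, hgNS a (by rw [hmemS]; tauto)]
    · rw [heval, hgNS x (by rw [hmemS]; tauto)]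
    · intro y hya hyx
      have hyS : y ∈ S := (hmemS y).mpr ⟨hya, hyx⟩
      rw [heval, hgS y hyS]
      have := hft ⟨y, hyS⟩
      rw [hA] at this
      simp only [Finset.mem_sdiff, Finset.mem_insert, Finset.mem_singleton] at this
      push_neg at this
      exact ⟨fun h => this.2.1 h, fun h => this.2.2 h⟩
  · -- n = 4 or n = 5
    have hn45 : n = 4 ∨ n = 5 := by omega
    rcases hn45 with rfl | rfl
    · -- n = 4 : S has two elements
      have h2 : S.card = 2 := by omega
      obtain ⟨p, q, hpq, hSeq⟩ := Finset.card_eq_two.mp h2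
      have hpS : p ∈ S := by rw [hSeq]; simp
      have hqS : q ∈ S := by rw [hSeq]; simp
      obtain ⟨hpa, hpx⟩ := (hmemS p).mp hpS
      obtain ⟨hqa, hqx⟩ := (hmemS q).mp hqS
      obtain ⟨gg, hgg⟩ := hgne
      have hggS : gg ∈ S := (hmemS gg).mpr (hfix gg hgg)
      have hggpq : gg = p ∨ gg = q := by
        rw [hSeq] at hggS; simpa using hggS
      refine ⟨Equiv.swap p q, ?_, ?_, ?_⟩
      · exact Equiv.swap_apply_of_ne_of_ne hpa.symm hqa.symm
      · exact Equiv.swap_apply_of_ne_of_ne hpx.symm hqx.symm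
      · intro y hya hyx
        have hyS : y ∈ S := (hmemS y).mpr ⟨hya, hyx⟩
        rw [hSeq] at hyS
        simp only [Finset.mem_insert, Finset.mem_singleton] at hyS
        have hσp : σ p ≠ q := by
          intro h
          rcases hggpq with rfl | rfl
          · exact hpq (hgg.symm.trans h)
          · exact hpq (σ.injective (h.trans hgg.symm))
        have hσq : σ q ≠ p := by
          intro h
          rcases hggpq with rfl | rfl
          · exact hpq (σ.injective (hgg.trans h.symm))
          · exact hpq ((hgg.symm.trans h).symm)
        rcases hyS with rfl | rfl
        · rw [Equiv.swap_apply_left]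
          exact ⟨fun h => hpq h.symm, fun h => hσp h.symm⟩
        · rw [Equiv.swap_apply_right]
          exact ⟨fun h => hpq h, fun h => hσq h.symm⟩
    · -- n = 5 : S has three elements
      have h3 : S.card = 3 := by omega
      obtain ⟨p, q, r, hpq, hpr, hqr, hSeq⟩ := Finset.card_eq_three.mp h3
      have hpS : p ∈ S := by rw [hSeq]; simp
      have hqS : q ∈ S := by rw [hSeq]; simp
      have hrS : r ∈ S := by rw [hSeq]; simp
      obtain ⟨hpa, hpx⟩ := (hmemS p).mp hpS
      obtain ⟨hqa, hqx⟩ := (hmemS q).mp hqS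
      obtain ⟨hra, hrx⟩ := (hmemS r).mp hrS
      have hno2' := hno2 rfl
      -- decide which 3-cycle to use
      have hmain : (σ p ≠ q ∧ σ q ≠ r ∧ σ r ≠ p) ∨ (σ p ≠ r ∧ σ r ≠ q ∧ σ q ≠ p) := by
        by_cases hpq' : σ p = q
        · right
          refine ⟨fun h => hqr (hpq'.symm.trans h), ?_, ?_⟩
          · intro h; exact hpr (σ.injective (h.trans hpq'.symm)).symm
          · intro h; exact hpq (hno2' p q hpa hpx hqa hqx hpq' h)
        · by_cases hqr' : σ q = r
          · right
            refine ⟨fun h => hpq (σ.injective (h.trans hqr'.symm)), ?_, ?_⟩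
            · intro h; exact hqr (hno2' q r hqa hqx hra hrx hqr' h)
            · intro h; exact hpr (h.symm.trans hqr')
          · by_cases hrp' : σ r = p
            · right
              refine ⟨?_, ?_, ?_⟩
              · intro h; exact hpr (hno2' p r hpa hpx hra hrx h hrp')
              · intro h; exact hpq (hrp'.symm.trans h)
              · intro h; exact hqr (σ.injective (h.trans hrp'.symm))
            · exact Or.inl ⟨hpq', hqr', hrp'⟩
      -- build the chosen 3-cycle
      rcases hmain with ⟨h1, h2, h3'⟩ | ⟨h1, h2, h3'⟩
      · -- cycle p→q→r→p : swap p q * swap q r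
        set e : Pm 5 := Equiv.swap p q * Equiv.swap q r with he
        have hep : e p = q := by
          rw [he, Equiv.Perm.mul_apply, Equiv.swap_apply_of_ne_of_ne hpq hpr,
            Equiv.swap_apply_left]
        have heq' : e q = r := by
          rw [he, Equiv.Perm.mul_apply, Equiv.swap_apply_left,
            Equiv.swap_apply_of_ne_of_ne hpr.symm hqr.symm]
        have her : e r = p := by
          rw [he, Equiv.Perm.mul_apply, Equiv.swap_apply_right, Equiv.swap_apply_right]
        have heo : ∀ y, y ≠ p → y ≠ q → y ≠ r → e y = y := by
          intro y hyp hyq hyr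
          rw [he, Equiv.Perm.mul_apply, Equiv.swap_apply_of_ne_of_ne hyq hyr,
            Equiv.swap_apply_of_ne_of_ne hyp hyq]
        refine ⟨e, heo a hpa.symm hqa.symm hra.symm, heo x hpx.symm hqx.symm hrx.symm, ?_⟩
        intro y hya hyx
        have hyS : y ∈ S := (hmemS y).mpr ⟨hya, hyx⟩
        rw [hSeq] at hyS
        simp only [Finset.mem_insert, Finset.mem_singleton] at hyS
        rcases hyS with rfl | rfl | rfl
        · rw [hep]; exact ⟨fun h => hpq h.symm, fun h => h1 h.symm⟩
        · rw [heq']; exact ⟨fun h => hqr h.symm, fun h => h2 h.symm⟩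
        · rw [her]; exact ⟨fun h => hpr h, fun h => h3' h.symm⟩
      · -- cycle p→r→q→p : swap p r * swap r q
        set e : Pm 5 := Equiv.swap p r * Equiv.swap r q with he
        have hep : e p = r := by
          rw [he, Equiv.Perm.mul_apply, Equiv.swap_apply_of_ne_of_ne hpr hpq,
            Equiv.swap_apply_left]
        have her : e r = q := by
          rw [he, Equiv.Perm.mul_apply, Equiv.swap_apply_left,
            Equiv.swap_apply_of_ne_of_ne hpq.symm hqr]
        have heq' : e q = p := by
          rw [he, Equiv.Perm.mul_apply, Equiv.swap_apply_right, Equiv.swap_apply_right]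
        have heo : ∀ y, y ≠ p → y ≠ q → y ≠ r → e y = y := by
          intro y hyp hyq hyr
          rw [he, Equiv.Perm.mul_apply, Equiv.swap_apply_of_ne_of_ne hyr hyq,
            Equiv.swap_apply_of_ne_of_ne hyp hyr]
        refine ⟨e, heo a hpa.symm hqa.symm hra.symm, heo x hpx.symm hqx.symm hrx.symm, ?_⟩
        intro y hya hyx
        have hyS : y ∈ S := (hmemS y).mpr ⟨hya, hyx⟩
        rw [hSeq] at hyS
        simp only [Finset.mem_insert, Finset.mem_singleton] at hyS
        rcases hyS with rfl | rfl | rfl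
        · rw [hep]; exact ⟨fun h => hpr h.symm, fun h => h1 h.symm⟩
        · rw [heq']; exact ⟨fun h => hpq h, fun h => h3' h.symm⟩
        · rw [her]; exact ⟨fun h => hqr h, fun h => h2 h.symm⟩
lemma coset_card (i j : Fin n) :
    ((Finset.univ : Finset (Pm n)).filter fun σ => σ i = j).card = (n-1).factorial := by
  classical
  rw [← Fintype.card_subtype]
  have e₁ : {σ : Pm n // σ i = j} ≃ {σ : Pm n // σ i = i} :=
    { toFun := fun σ => ⟨Equiv.swap i j * σ.1, by
        simp [Equiv.Perm.mul_apply, σ.2]⟩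
      invFun := fun σ => ⟨Equiv.swap i j * σ.1, by
        simp [Equiv.Perm.mul_apply, σ.2]⟩
      left_inv := fun σ => by
        ext1
        simp [← mul_assoc, Equiv.swap_mul_self]
      right_inv := fun σ => by
        ext1
        simp [← mul_assoc, Equiv.swap_mul_self] }
  have e₂ : {σ : Pm n // σ i = i} ≃ {σ : Pm n // ∀ a, ¬(a ≠ i) → σ a = a} :=
    Equiv.subtypeEquivRight (by
      intro σ
      constructor
      · intro h a ha
        rw [not_not] at ha
        rw [ha, h]
      · intro h
        exact h i (by simp))
  have e₃ : {σ : Pm n // ∀ a, ¬(a ≠ i) → σ a = a} ≃ Equiv.Perm {a : Fin n // a ≠ i} :=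
    (Equiv.Perm.subtypeEquivSubtypePerm (fun a => a ≠ i)).symm
  have hcard : Fintype.card {a : Fin n // a ≠ i} = Fintype.card (Fin (n-1)) := by
    have h1 : Fintype.card {a : Fin n // a = i} = 1 := Fintype.card_subtype_eq i
    have : Fintype.card {a : Fin n // ¬ (a = i)} = n - 1 := by
      rw [Fintype.card_subtype_compl, Fintype.card_fin, h1]
    simpa using this.trans (Fintype.card_fin (n-1)).symm
  have e₄ : Equiv.Perm {a : Fin n // a ≠ i} ≃ Equiv.Perm (Fin (n-1)) :=
    Equiv.permCongr (Fintype.equivOfCardEq hcard)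
  rw [Fintype.card_congr (((e₁.trans e₂).trans e₃).trans e₄), Fintype.card_perm,
    Fintype.card_fin]
lemma core (hn : 4 ≤ n) (B : Finset (Pm n)) (h1B : (1 : Pm n) ∈ B)
    (hint : ∀ σ ∈ B, ∀ π ∈ B, ∃ i, σ i = π i) (hcard : B.card = (n-1).factorial) :
    ∃ a, ∀ β ∈ B, β a = a := by
  classical
  obtain ⟨R, hRdiag, hRdisj⟩ := exists_idem_perm (n := n) (by omega)
  have hRinj : Function.Injective R := by
    intro a b h
    by_contra hne
    exact hRdisj a b a hne (by rw [h])
  set C₀ : Finset (Pm n) := Finset.image R Finset.univ with hC₀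
  have hC₀clique : IsClique C₀ := by
    intro γ hγ γ' hγ' hne i
    rw [hC₀, Finset.mem_image] at hγ hγ'
    obtain ⟨b, -, rfl⟩ := hγ
    obtain ⟨b', -, rfl⟩ := hγ'
    exact hRdisj b b' i (fun h => hne (by rw [h]))
  have hC₀card : C₀.card = n := by
    rw [hC₀, Finset.card_image_of_injective _ hRinj, Finset.card_univ, Fintype.card_fin]
  obtain ⟨ρ, hρC, hρB⟩ := clique_meets (by omega) B hint hcard C₀ hC₀clique hC₀card
  rw [hC₀, Finset.mem_image] at hρC
  obtain ⟨a, -, rfl⟩ := hρC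
  refine ⟨a, ?_⟩
  intro σ hσB
  by_contra hσa
  -- ρ := R a fixes exactly a
  have hρfix : ∀ i, i ≠ a → R a i ≠ i := by
    intro i hi h
    exact hRdisj a i i (fun hh => hi (by rw [hh])) (by rw [h, hRdiag i])
  -- σ has a fixed point, which is not a
  have hGne : ∃ g, σ g = g := by
    obtain ⟨i, hi⟩ := hint σ hσB 1 h1B
    exact ⟨i, by simpa using hi⟩
  have hGsub : ∀ y, σ y = y → y ≠ a := fun y hy h => hσa (h ▸ hy)
  -- choose x
  have hxex : ∃ x : Fin n, x ≠ a ∧ σ x ≠ x ∧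
      (n = 5 → ∀ p q : Fin n, p ≠ a → p ≠ x → q ≠ a → q ≠ x →
        σ p = q → σ q = p → p = q) := by
    by_cases h2c : ∃ p, σ p ≠ p ∧ σ (σ p) = p ∧ p ≠ a ∧ σ p ≠ a
    · obtain ⟨p, hp1, hp2, hp3, hp4⟩ := h2c
      refine ⟨p, hp3, hp1, ?_⟩
      intro h5 r s hra hrp hsa hsp hrs hsr
      by_contra hrsne
      set q := σ p with hq
      have hqp : σ q = p := hp2
      have hqa : q ≠ a := hp4
      have hqp' : q ≠ p := hp1
      have hqr : q ≠ r := by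
        intro h
        rw [h] at hqp
        rw [hrs] at hqp
        exact hsp hqp
      have hqs : q ≠ s := by
        intro h
        rw [h] at hqp
        rw [hsr] at hqp
        exact hrp hqp
      -- a, p, q, r, s are distinct; 5 elements in Fin 5
      have hpr : p ≠ r := fun h => hrp h.symm
      have hps : p ≠ s := fun h => hsp h.symm
      have hap : a ≠ p := hp3.symm
      have haq : a ≠ q := hqa.symm
      have har : a ≠ r := hra.symm
      have has : a ≠ s := hsa.symm
      have hcard5 : ({a, p, q, r, s} : Finset (Fin n)).card = 5 := by
        rw [Finset.card_insert_of_notMem (by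
          simp only [Finset.mem_insert, Finset.mem_singleton]
          push_neg
          exact ⟨hap, haq, har, has⟩)]
        rw [Finset.card_insert_of_notMem (by
          simp only [Finset.mem_insert, Finset.mem_singleton]
          push_neg
          exact ⟨hqp'.symm, hpr, hps⟩)]
        rw [Finset.card_insert_of_notMem (by
          simp only [Finset.mem_insert, Finset.mem_singleton]
          push_neg
          exact ⟨hqr, hqs⟩)]
        rw [Finset.card_insert_of_notMem (by
          simp only [Finset.mem_singleton]
          exact hrsne)]
        rw [Finset.card_singleton]
      have huniv : ({a, p, q, r, s} : Finset (Fin n)) = Finset.univ :=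
        Finset.eq_univ_of_card _ (by rw [hcard5, h5, Fintype.card_fin])
      have hσamem : σ a ∈ ({a, p, q, r, s} : Finset (Fin n)) := by
        rw [huniv]; exact Finset.mem_univ _
      simp only [Finset.mem_insert, Finset.mem_singleton] at hσamem
      rcases hσamem with h | h | h | h | h
      · exact hσa h
      · exact haq (σ.injective (h.trans hqp.symm))
      · exact hap (σ.injective (h.trans hq.symm))
      · exact has (σ.injective (h.trans hsr.symm))
      · exact har (σ.injective (h.trans hrs.symm))
    · push_neg at h2c
      refine ⟨σ⁻¹ a, ?_, ?_, ?_⟩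
      · intro h
        exact hσa ((congrArg σ h).symm.trans (σ.apply_symm_apply a))
      · rw [show σ (σ⁻¹ a) = a from σ.apply_symm_apply a]
        intro h
        exact hσa ((congrArg σ h.symm).symm.trans (σ.apply_symm_apply a))
      · intro h5 r s hra hrx hsa hsx hrs hsr
        by_contra hrsne
        have h2 := h2c r (by rw [hrs]; exact fun hh => hrsne hh.symm)
          (by rw [hrs]; exact hsr) hra
        exact hsa (hrs.symm.trans h2)
  obtain ⟨x, hax', hσx, hno2⟩ := hxex
  have hax : a ≠ x := fun h => hax' h.symm
  have hfix' : ∀ y, σ y = y → y ≠ a ∧ y ≠ x := by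
    intro y hy
    exact ⟨hGsub y hy, fun h => hσx (h ▸ hy)⟩
  obtain ⟨e, hea, hex, heS⟩ := avoid_perm hn a x hax σ hfix' hGne hno2
  -- the two special rows
  have hswne : Equiv.swap a x ≠ e := by
    intro h
    have : Equiv.swap a x a = e a := by rw [h]
    rw [Equiv.swap_apply_left, hea] at this
    exact hax' this
  set D : Finset (Pm n) := {Equiv.swap a x, e} with hD
  have hDdisj : ∀ i, Equiv.swap a x i ≠ e i := by
    intro i
    by_cases hia : i = a
    · subst hia
      rw [Equiv.swap_apply_left, hea]
      exact hax'
    · by_cases hix : i = x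
      · subst hix
        rw [Equiv.swap_apply_right, hex]
        exact hax
      · rw [Equiv.swap_apply_of_ne_of_ne hia hix]
        exact fun h => (heS i hia hix).1 h.symm
  have hDclique : IsClique D := by
    intro γ hγ γ' hγ' hne i
    rw [hD] at hγ hγ'
    simp only [Finset.mem_insert, Finset.mem_singleton] at hγ hγ'
    rcases hγ with rfl | rfl <;> rcases hγ' with rfl | rfl
    · exact absurd rfl hne
    · exact hDdisj i
    · exact fun h => hDdisj i h.symm
    · exact absurd rfl hne
  have hDcard : D.card ≤ n := by
    apply le_trans (Finset.card_insert_le _ _)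
    simp only [Finset.card_singleton]
    omega
  obtain ⟨C, hCsub, hCclique, hCcard⟩ := clique_extend D hDclique hDcard
  obtain ⟨γ, hγC, hγB⟩ := clique_meets (by omega) B hint hcard C hCclique hCcard
  have hswD : Equiv.swap a x ∈ C := hCsub (by rw [hD]; simp)
  have heD : e ∈ C := hCsub (by rw [hD]; simp)
  by_cases hγsw : γ = Equiv.swap a x
  · -- contradiction with ρ = R a ∈ B
    subst hγsw
    obtain ⟨i, hi⟩ := hint _ hγB _ hρB
    by_cases hia : i = a
    · rw [hia, Equiv.swap_apply_left, hRdiag] at hi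
      exact hax' hi
    · by_cases hix : i = x
      · rw [hix, Equiv.swap_apply_right] at hi
        have hRx : R a x = R a a := by rw [hRdiag]; exact hi.symm
        exact hax ((R a).injective hRx).symm
      · rw [Equiv.swap_apply_of_ne_of_ne hia hix] at hi
        exact hρfix i hia hi.symm
  · by_cases hγe : γ = e
    · subst hγe
      obtain ⟨i, hi⟩ := hint _ hγB _ hσB
      by_cases hia : i = a
      · rw [hia, hea] at hi; exact hσa hi.symm
      · by_cases hix : i = x
        · rw [hix, hex] at hi; exact hσx hi.symm
        · exact (heS i hia hix).2 hi
    · -- γ is a derangement, contradicting 1 ∈ B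
      have hder : ∀ i, γ i ≠ i := by
        intro i
        by_cases hia : i = a
        · rw [hia]
          have := hCclique γ hγC e heD hγe a
          rwa [hea] at this
        · by_cases hix : i = x
          · rw [hix]
            have := hCclique γ hγC e heD hγe x
            rwa [hex] at this
          · have := hCclique γ hγC (Equiv.swap a x) hswD hγsw i
            rwa [Equiv.swap_apply_of_ne_of_ne hia hix] at this
      obtain ⟨i, hi⟩ := hint _ hγB 1 h1B
      simp only [Equiv.Perm.one_apply] at hi
      exact hder i hi
theorem ekr_perm_uniqueness (n : ℕ) (hn : 2 ≤ n)
    (F : Finset (Equiv.Perm (Fin n)))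
    (hint : ∀ σ ∈ F, ∀ π ∈ F, ∃ i : Fin n, σ i = π i)
    (hmax : F.card = (n - 1).factorial) :
    ∃ i j : Fin n, F = Finset.univ.filter (fun σ : Equiv.Perm (Fin n) => σ i = j) := by
  classical
  -- it suffices to find i j with F ⊆ coset
  have hend : ∀ i j : Fin n,
      F ⊆ Finset.univ.filter (fun σ : Equiv.Perm (Fin n) => σ i = j) →
      F = Finset.univ.filter (fun σ : Equiv.Perm (Fin n) => σ i = j) := by
    intro i j hsub
    apply Finset.eq_of_subset_of_card_le hsub
    rw [coset_card i j, hmax]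
  by_cases h4 : 4 ≤ n
  · -- main case
    have hFne : F.Nonempty := by
      rw [← Finset.card_pos, hmax]
      exact Nat.factorial_pos _
    obtain ⟨g, hg⟩ := hFne
    set B : Finset (Pm n) := F.image (fun σ => σ * g⁻¹) with hB
    have h1B : (1 : Pm n) ∈ B := by
      rw [hB, Finset.mem_image]
      exact ⟨g, hg, mul_inv_cancel g⟩
    have hintB : ∀ σ ∈ B, ∀ π ∈ B, ∃ i, σ i = π i := by
      intro σ' hσ' π' hπ'
      rw [hB, Finset.mem_image] at hσ' hπ'
      obtain ⟨σ, hσ, rfl⟩ := hσ'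
      obtain ⟨π, hπ, rfl⟩ := hπ'
      obtain ⟨i, hi⟩ := hint σ hσ π hπ
      refine ⟨g i, ?_⟩
      simp only [Equiv.Perm.mul_apply, Equiv.Perm.coe_inv, Equiv.symm_apply_apply]
      exact hi
    have hcardB : B.card = (n-1).factorial := by
      rw [hB, Finset.card_image_of_injective _ (mul_left_injective g⁻¹), hmax]
    obtain ⟨a, ha⟩ := core h4 B h1B hintB hcardB
    refine ⟨g⁻¹ a, a, hend _ _ ?_⟩
    intro σ hσ
    rw [Finset.mem_filter]
    refine ⟨Finset.mem_univ _, ?_⟩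
    have hmem : σ * g⁻¹ ∈ B := by
      rw [hB, Finset.mem_image]
      exact ⟨σ, hσ, rfl⟩
    have := ha _ hmem
    simpa [Equiv.Perm.mul_apply] using this
  · -- n = 2 or n = 3
    have h23 : n = 2 ∨ n = 3 := by omega
    rcases h23 with rfl | rfl
    · have h1 : F.card = 1 := by simpa using hmax
      obtain ⟨σ₀, hσ₀⟩ := Finset.card_eq_one.mp h1
      refine ⟨0, σ₀ 0, hend _ _ ?_⟩
      intro σ hσ
      rw [hσ₀, Finset.mem_singleton] at hσ
      subst hσ
      simp
    · have h2 : F.card = 2 := by simpa using hmax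
      obtain ⟨α, β, hαβ, hFeq⟩ := Finset.card_eq_two.mp h2
      have hα : α ∈ F := by rw [hFeq]; simp
      have hβ : β ∈ F := by rw [hFeq]; simp
      obtain ⟨i, hi⟩ := hint α hα β hβ
      refine ⟨i, α i, hend _ _ ?_⟩
      intro σ hσ
      rw [hFeq] at hσ
      simp only [Finset.mem_insert, Finset.mem_singleton] at hσ
      rw [Finset.mem_filter]
      rcases hσ with rfl | rfl
      · simp
      · simp [← hi]
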